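/- Theorem 2 (convergence of HCISTA, precise stationarity form). Let (xⁿ, vⁿ, uⁿ, wⁿ) be an HCISTA trajectory and assume there is a constant η_c > 0 such that ‖uⁿ − xⁿ‖₂ ≤ η_c·‖vⁿ − xⁿ‖₂ for every n with vⁿ ≠ xⁿ (Assumption 1). Then every accumulation point x̄ of the sequence (xⁿ) (i.e., every limit of a convergent subsequence) satisfies Aᵀ(A x̄ − b) = 0; equivalently, x̄ is a global minimizer of x ↦ (1/2)‖Ax − b‖₂² on ℝ^N. -/

import Mathlib

/-- The Euclidean (ℓ²) norm on `Fin n → ℝ`. -/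
noncomputable def l2norm {n : ℕ} (x : Fin n → ℝ) : ℝ := Real.sqrt (∑ i, (x i) ^ 2)

/-- The ℓ¹ norm on `Fin n → ℝ`. -/
noncomputable def l1norm {n : ℕ} (x : Fin n → ℝ) : ℝ := ∑ i, |x i|

/-- The operator norm ‖A‖₂ of a matrix with respect to Euclidean norms. -/
noncomputable def opNorm {m n : ℕ} (A : Matrix (Fin m) (Fin n) ℝ) : ℝ :=
  sSup {c : ℝ | ∃ x : Fin n → ℝ, l2norm x ≤ 1 ∧ c = l2norm (A.mulVec x)}

/-- Componentwise soft-thresholding: `S_θ(z)ᵢ = sgn(zᵢ) * max (|zᵢ| - θ) 0`. -/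
noncomputable def soft {n : ℕ} (θ : ℝ) (z : Fin n → ℝ) : Fin n → ℝ :=
  fun i => Real.sign (z i) * max (|z i| - θ) 0

/-- Gradient of `f(x) = (1/2)‖Ax - b‖₂²`, namely `Aᵀ(Ax - b)`. -/
def gradf {m n : ℕ} (A : Matrix (Fin m) (Fin n) ℝ) (b : Fin m → ℝ) (x : Fin n → ℝ) :
    Fin n → ℝ :=
  A.transpose.mulVec (A.mulVec x - b)

/-- The Lasso objective `F_λ(x) = (1/2)‖Ax - b‖₂² + λ‖x‖₁`. -/
noncomputable def Flasso {m n : ℕ} (A : Matrix (Fin m) (Fin n) ℝ) (b : Fin m → ℝ)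
    (lam : ℝ) (x : Fin n → ℝ) : ℝ :=
  (1 / 2) * (l2norm (A.mulVec x - b)) ^ 2 + lam * l1norm x

/-- `s` is a subgradient of the convex function `φ` at the point `z`:
`φ(y) ≥ φ(z) + ⟨s, y - z⟩` for all `y`. -/
def IsSubgradient {n : ℕ} (φ : (Fin n → ℝ) → ℝ) (s z : Fin n → ℝ) : Prop :=
  ∀ y : Fin n → ℝ, φ z + ∑ i, s i * (y i - z i) ≤ φ y

namespace HC

noncomputable def sq2 {n : ℕ} (x : Fin n → ℝ) : ℝ := ∑ i, (x i) ^ 2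
noncomputable def ip {n : ℕ} (x y : Fin n → ℝ) : ℝ := ∑ i, x i * y i

lemma sq2_nonneg {n : ℕ} (x : Fin n → ℝ) : 0 ≤ sq2 x :=
  Finset.sum_nonneg fun i _ => sq_nonneg _

lemma l2_eq_sqrt_sq2 {n : ℕ} (x : Fin n → ℝ) : l2norm x = Real.sqrt (sq2 x) := rfl

lemma l2_nonneg {n : ℕ} (x : Fin n → ℝ) : 0 ≤ l2norm x := Real.sqrt_nonneg _

lemma l2_sq {n : ℕ} (x : Fin n → ℝ) : (l2norm x) ^ 2 = sq2 x :=
  Real.sq_sqrt (sq2_nonneg x)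

lemma sq2_eq_zero {n : ℕ} {x : Fin n → ℝ} (h : sq2 x = 0) : x = 0 := by
  funext i
  have := (Finset.sum_eq_zero_iff_of_nonneg (fun i _ => sq_nonneg (x i))).mp h i (Finset.mem_univ i)
  exact pow_eq_zero_iff (n := 2) (by norm_num) |>.mp this

lemma sq2_pos {n : ℕ} {x : Fin n → ℝ} (h : x ≠ 0) : 0 < sq2 x :=
  lt_of_le_of_ne (sq2_nonneg x) fun h' => h (sq2_eq_zero h'.symm)

lemma l2_zero {n : ℕ} : l2norm (0 : Fin n → ℝ) = 0 := by
  simp [l2norm]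

lemma l2_pos {n : ℕ} {x : Fin n → ℝ} (h : x ≠ 0) : 0 < l2norm x :=
  Real.sqrt_pos.mpr (sq2_pos h)

lemma abs_ip_le {n : ℕ} (x y : Fin n → ℝ) : |ip x y| ≤ l2norm x * l2norm y := by
  have h := Finset.sum_mul_sq_le_sq_mul_sq Finset.univ x y
  have : |ip x y| = Real.sqrt ((ip x y) ^ 2) := (Real.sqrt_sq_eq_abs _).symm
  rw [this, l2_eq_sqrt_sq2, l2_eq_sqrt_sq2, ← Real.sqrt_mul (sq2_nonneg x)]
  exact Real.sqrt_le_sqrt h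

lemma ip_le {n : ℕ} (x y : Fin n → ℝ) : ip x y ≤ l2norm x * l2norm y :=
  le_trans (le_abs_self _) (abs_ip_le x y)

lemma sq2_add {n : ℕ} (x y : Fin n → ℝ) :
    sq2 (x + y) = sq2 x + 2 * ip x y + sq2 y := by
  simp only [sq2, ip, Pi.add_apply]
  rw [Finset.mul_sum, ← Finset.sum_add_distrib, ← Finset.sum_add_distrib]
  exact Finset.sum_congr rfl fun i _ => by ring

lemma l2_smul {n : ℕ} (c : ℝ) (x : Fin n → ℝ) : l2norm (c • x) = |c| * l2norm x := by
  simp only [l2norm, Pi.smul_apply, smul_eq_mul, mul_pow, ← Finset.mul_sum]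
  rw [Real.sqrt_mul (sq_nonneg c), Real.sqrt_sq_eq_abs]

lemma l2_triangle {n : ℕ} (x y : Fin n → ℝ) : l2norm (x + y) ≤ l2norm x + l2norm y := by
  rw [l2_eq_sqrt_sq2]
  have h : sq2 (x + y) ≤ (l2norm x + l2norm y) ^ 2 := by
    rw [sq2_add]
    have := ip_le x y
    have hx := l2_sq x; have hy := l2_sq y
    nlinarith
  calc Real.sqrt (sq2 (x + y)) ≤ Real.sqrt ((l2norm x + l2norm y) ^ 2) := Real.sqrt_le_sqrt h
    _ = |l2norm x + l2norm y| := Real.sqrt_sq_eq_abs _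
    _ = l2norm x + l2norm y := abs_of_nonneg (add_nonneg (l2_nonneg x) (l2_nonneg y))

lemma l2_sub_le {n : ℕ} (x y z : Fin n → ℝ) : l2norm (x - z) ≤ l2norm (x - y) + l2norm (y - z) := by
  have : x - z = (x - y) + (y - z) := by ring
  rw [this]; exact l2_triangle _ _

end HC

namespace HC

lemma ip_comm {n : ℕ} (x y : Fin n → ℝ) : ip x y = ip y x := by
  simp only [ip]; exact Finset.sum_congr rfl fun i _ => mul_comm _ _

lemma ip_adj {m n : ℕ} (A : Matrix (Fin m) (Fin n) ℝ) (r : Fin m → ℝ) (d : Fin n → ℝ) :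
    ip r (A.mulVec d) = ip (A.transpose.mulVec r) d := by
  have h1 : ip r (A.mulVec d) = dotProduct r (A.mulVec d) := rfl
  have h2 : ip (A.transpose.mulVec r) d = dotProduct (A.transpose.mulVec r) d := rfl
  rw [h1, h2, Matrix.dotProduct_mulVec, Matrix.mulVec_transpose]

-- key quadratic expansion of f
lemma f_expand {m n : ℕ} (A : Matrix (Fin m) (Fin n) ℝ) (b : Fin m → ℝ) (x y : Fin n → ℝ) :
    sq2 (A.mulVec y - b) =
      sq2 (A.mulVec x - b) + 2 * ip (gradf A b x) (y - x) + sq2 (A.mulVec (y - x)) := by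
  have hd : A.mulVec y - b = (A.mulVec x - b) + A.mulVec (y - x) := by
    rw [Matrix.mulVec_sub]; ring
  rw [hd, sq2_add, ip_adj]
  rfl

end HC

namespace HC

lemma l2_le_sum_abs {n : ℕ} (x : Fin n → ℝ) : l2norm x ≤ ∑ i, |x i| := by
  rw [l2_eq_sqrt_sq2]
  have h : sq2 x ≤ (∑ i, |x i|) ^ 2 := by
    have hterm : ∀ i ∈ Finset.univ, (x i)^2 ≤ |x i| * (∑ j, |x j|) := by
      intro i _
      have h1 : |x i| ≤ ∑ j, |x j| :=
        Finset.single_le_sum (fun j _ => abs_nonneg (x j)) (Finset.mem_univ i)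
      calc (x i)^2 = |x i| * |x i| := by rw [← sq_abs]; ring
        _ ≤ |x i| * (∑ j, |x j|) := mul_le_mul_of_nonneg_left h1 (abs_nonneg _)
    calc sq2 x ≤ ∑ i, |x i| * (∑ j, |x j|) := Finset.sum_le_sum hterm
      _ = (∑ i, |x i|) ^ 2 := by rw [← Finset.sum_mul]; ring
  calc Real.sqrt (sq2 x) ≤ Real.sqrt ((∑ i, |x i|)^2) := Real.sqrt_le_sqrt h
    _ = abs (∑ i, |x i|) := Real.sqrt_sq_eq_abs _
    _ = ∑ i, |x i| := abs_of_nonneg (Finset.sum_nonneg fun i _ => abs_nonneg _)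

section opnorm
variable {m n : ℕ} (A : Matrix (Fin m) (Fin n) ℝ)

lemma opSet_bdd : ∀ c ∈ {c : ℝ | ∃ x : Fin n → ℝ, l2norm x ≤ 1 ∧ c = l2norm (A.mulVec x)},
    c ≤ ∑ i, l2norm (fun j => A i j) := by
  rintro c ⟨x, hx, rfl⟩
  calc l2norm (A.mulVec x) ≤ ∑ i, |A.mulVec x i| := l2_le_sum_abs _
    _ ≤ ∑ i, l2norm (fun j => A i j) := by
        apply Finset.sum_le_sum
        intro i _
        have h1 : A.mulVec x i = ip (fun j => A i j) x := rfl
        rw [h1]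
        calc |ip (fun j => A i j) x| ≤ l2norm (fun j => A i j) * l2norm x := abs_ip_le _ _
          _ ≤ l2norm (fun j => A i j) * 1 := mul_le_mul_of_nonneg_left hx (l2_nonneg _)
          _ = l2norm (fun j => A i j) := mul_one _

lemma opNorm_nonneg : 0 ≤ opNorm A := by
  apply le_csSup ⟨_, opSet_bdd A⟩
  exact ⟨0, by simp [l2_zero], by simp [l2_zero]⟩

lemma mulVec_le (z : Fin n → ℝ) : l2norm (A.mulVec z) ≤ opNorm A * l2norm z := by
  by_cases hz : z = 0
  · simp [hz, l2_zero]
  · have hpos := l2_pos hz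
    have hmem : l2norm (A.mulVec ((l2norm z)⁻¹ • z)) ∈
        {c : ℝ | ∃ x : Fin n → ℝ, l2norm x ≤ 1 ∧ c = l2norm (A.mulVec x)} := by
      refine ⟨_, ?_, rfl⟩
      rw [l2_smul]
      rw [abs_of_nonneg (inv_nonneg.mpr (l2_nonneg z)), inv_mul_cancel₀ (ne_of_gt hpos)]
    have hle := le_csSup ⟨_, opSet_bdd A⟩ hmem
    rw [Matrix.mulVec_smul, l2_smul, abs_of_nonneg (inv_nonneg.mpr (l2_nonneg z))] at hle
    calc l2norm (A.mulVec z) = (l2norm z) * ((l2norm z)⁻¹ * l2norm (A.mulVec z)) := by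
          field_simp
      _ ≤ (l2norm z) * opNorm A := mul_le_mul_of_nonneg_left hle (l2_nonneg z)
      _ = opNorm A * l2norm z := mul_comm _ _

lemma opNorm_pos (hA : A ≠ 0) : 0 < opNorm A := by
  have : ∃ i j, A i j ≠ 0 := by
    by_contra h
    push_neg at h
    exact hA (by ext i j; exact h i j)
  obtain ⟨i, j, hij⟩ := this
  set x : Fin n → ℝ := Pi.single j 1 with hxdef
  have hx1 : l2norm x = 1 := by
    have : sq2 x = 1 := by
      simp only [sq2, hxdef]
      rw [Finset.sum_eq_single j]
      · simp
      · intro k _ hk; simp [Pi.single_apply, hk]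
      · intro h; exact absurd (Finset.mem_univ j) h
    rw [l2_eq_sqrt_sq2, this, Real.sqrt_one]
  have hmem : l2norm (A.mulVec x) ∈
      {c : ℝ | ∃ x : Fin n → ℝ, l2norm x ≤ 1 ∧ c = l2norm (A.mulVec x)} :=
    ⟨x, le_of_eq hx1, rfl⟩
  have hle : l2norm (A.mulVec x) ≤ opNorm A := le_csSup ⟨_, opSet_bdd A⟩ hmem
  have hAx : A.mulVec x i = A i j := by
    simp only [Matrix.mulVec, dotProduct, hxdef]
    rw [Finset.sum_eq_single j]
    · simp
    · intro k _ hk; simp [Pi.single_apply, hk]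
    · intro h; exact absurd (Finset.mem_univ j) h
  have hlow : |A i j| ≤ l2norm (A.mulVec x) := by
    rw [← hAx, l2_eq_sqrt_sq2]
    have h1 : (A.mulVec x i)^2 ≤ sq2 (A.mulVec x) := by
      have := Finset.single_le_sum (f := fun k => (A.mulVec x k)^2)
        (fun k _ => sq_nonneg _) (Finset.mem_univ i)
      exact this
    calc |A.mulVec x i| = Real.sqrt ((A.mulVec x i)^2) := (Real.sqrt_sq_eq_abs _).symm
      _ ≤ Real.sqrt (sq2 (A.mulVec x)) := Real.sqrt_le_sqrt h1
  have : (0:ℝ) < |A i j| := abs_pos.mpr hij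
  linarith

end opnorm
end HC

namespace HC

noncomputable def clampf (θ a : ℝ) : ℝ := max (-θ) (min θ a)

lemma soft_eq_clamp {θ : ℝ} (hθ : 0 ≤ θ) (a : ℝ) :
    Real.sign a * max (|a| - θ) 0 = a - clampf θ a := by
  unfold clampf
  rcases lt_trichotomy a 0 with h | h | h
  · rw [Real.sign_of_neg h, abs_of_neg h]
    rcases le_total a (-θ) with h2 | h2
    · rw [max_eq_left (by linarith), min_eq_right (by linarith), max_eq_left h2]
      ring
    · rw [max_eq_right (by linarith), min_eq_right (by linarith), max_eq_right h2]
      ring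
  · subst h
    simp [Real.sign_zero, min_eq_right hθ, max_eq_right (by linarith : -θ ≤ (0:ℝ))]
  · rw [Real.sign_of_pos h, abs_of_pos h]
    rcases le_total θ a with h2 | h2
    · rw [max_eq_left (by linarith), min_eq_left h2,
        max_eq_right (by linarith : -θ ≤ θ)]
      ring
    · rw [max_eq_right (by linarith), min_eq_right h2,
        max_eq_right (by linarith : -θ ≤ a)]
      ring

lemma clampf_le {θ : ℝ} (hθ : 0 ≤ θ) (a : ℝ) : -θ ≤ clampf θ a ∧ clampf θ a ≤ θ := by
  unfold clampf
  constructor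
  · exact le_max_left _ _
  · exact max_le (by linarith) (min_le_left _ _)

lemma softS_prox {θ : ℝ} (hθ : 0 ≤ θ) (a y : ℝ) :
    (a - (a - clampf θ a)) * (y - (a - clampf θ a)) + θ * |a - clampf θ a| ≤ θ * |y| := by
  set s := a - clampf θ a with hs
  have h1 : a - s = clampf θ a := by rw [hs]; ring
  rw [h1]
  unfold clampf at *
  rcases le_total a (-θ) with h2 | h2
  · -- clamp = -θ, s = a + θ ≤ 0
    have hc : max (-θ) (min θ a) = -θ := by
      rw [min_eq_right (le_trans h2 (by linarith))]; exact max_eq_left h2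
    rw [hc]
    have hss : s = a + θ := by rw [hs, hc]; ring
    have : |s| = -s := abs_of_nonpos (by rw [hss]; linarith)
    rw [this]
    have hy : -y ≤ |y| := neg_le_abs y
    nlinarith
  · rcases le_total θ a with h3 | h3
    · have hc : max (-θ) (min θ a) = θ := by rw [min_eq_left h3]; exact max_eq_right (by linarith)
      rw [hc]
      have hss : s = a - θ := by rw [hs, hc]
      have : |s| = s := abs_of_nonneg (by rw [hss]; linarith)
      rw [this]
      have hy : y ≤ |y| := le_abs_self y
      nlinarith
    · -- |a| ≤ θ, clamp = a, s = 0
      have hc : max (-θ) (min θ a) = a := by rw [min_eq_right h3]; exact max_eq_right h2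
      rw [hc]
      have hss : s = 0 := by rw [hs, hc]; ring
      rw [hss]
      simp only [abs_zero, mul_zero, sub_zero, add_zero]
      calc a * y ≤ |a * y| := le_abs_self _
        _ = |a| * |y| := abs_mul _ _
        _ ≤ θ * |y| := mul_le_mul_of_nonneg_right (abs_le.mpr ⟨h2, h3⟩) (abs_nonneg _)

lemma clampf_nonexpansive {θ : ℝ} (a b : ℝ) :
    |(a - clampf θ a) - (b - clampf θ b)| ≤ |a - b| := by
  unfold clampf
  rcases abs_cases (a - b) with ⟨h, _⟩ | ⟨h, _⟩ <;>
  · rw [abs_le]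
    constructor <;>
    · simp only [max_def, min_def]
      split_ifs <;> linarith

lemma clampf_close {θ : ℝ} (hθ : 0 ≤ θ) (a : ℝ) : |(a - clampf θ a) - a| ≤ θ := by
  obtain ⟨h1, h2⟩ := clampf_le hθ a
  rw [abs_le]; constructor <;> [skip; skip] <;> · simp only [sub_sub_cancel_left]; linarith

end HC

namespace HC

lemma soft_apply {n : ℕ} {θ : ℝ} (hθ : 0 ≤ θ) (z : Fin n → ℝ) (i : Fin n) :
    soft θ z i = z i - clampf θ (z i) := soft_eq_clamp hθ (z i)

lemma soft_prox {n : ℕ} {θ : ℝ} (hθ : 0 ≤ θ) (z y : Fin n → ℝ) :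
    ip (z - soft θ z) (y - soft θ z) + θ * l1norm (soft θ z) ≤ θ * l1norm y := by
  simp only [ip, l1norm, Pi.sub_apply, Finset.mul_sum]
  rw [← Finset.sum_add_distrib]
  apply Finset.sum_le_sum
  intro i _
  rw [soft_apply hθ]
  exact softS_prox hθ (z i) (y i)

lemma sq2_soft_sub {n : ℕ} {θ : ℝ} (hθ : 0 ≤ θ) (a c : Fin n → ℝ) :
    sq2 (soft θ a - soft θ c) ≤ sq2 (a - c) := by
  simp only [sq2, Pi.sub_apply]
  apply Finset.sum_le_sum
  intro i _
  rw [soft_apply hθ, soft_apply hθ]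
  have h := clampf_nonexpansive (θ := θ) (a i) (c i)
  calc ((a i - clampf θ (a i)) - (c i - clampf θ (c i)))^2
      = |(a i - clampf θ (a i)) - (c i - clampf θ (c i))|^2 := (sq_abs _).symm
    _ ≤ |a i - c i|^2 := by apply pow_le_pow_left₀ (abs_nonneg _) h
    _ = (a i - c i)^2 := sq_abs _

lemma sq2_soft_close {n : ℕ} {θ : ℝ} (hθ : 0 ≤ θ) (z : Fin n → ℝ) :
    sq2 (soft θ z - z) ≤ (n : ℝ) * θ^2 := by
  simp only [sq2, Pi.sub_apply]
  calc ∑ i, (soft θ z i - z i)^2 ≤ ∑ _i : Fin n, θ^2 := by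
        apply Finset.sum_le_sum
        intro i _
        rw [soft_apply hθ]
        have h := clampf_close hθ (z i)
        calc (z i - clampf θ (z i) - z i)^2 = |z i - clampf θ (z i) - z i|^2 := (sq_abs _).symm
          _ ≤ θ^2 := by apply pow_le_pow_left₀ (abs_nonneg _) h
    _ = (n : ℝ) * θ^2 := by rw [Finset.sum_const, Finset.card_univ, Fintype.card_fin]; ring

lemma ip_adj' {m n : ℕ} (A : Matrix (Fin m) (Fin n) ℝ) (d : Fin n → ℝ) (r : Fin m → ℝ) :
    ip d (A.transpose.mulVec r) = ip (A.mulVec d) r := by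
  rw [ip_comm, ← ip_adj, ip_comm]

lemma sq2_eq_ip {n : ℕ} (x : Fin n → ℝ) : sq2 x = ip x x := by
  simp only [sq2, ip]
  exact Finset.sum_congr rfl fun i _ => sq (x i) ▸ by ring

lemma ip_smul_right {n : ℕ} (c : ℝ) (x y : Fin n → ℝ) : ip x (c • y) = c * ip x y := by
  simp only [ip, Pi.smul_apply, smul_eq_mul, Finset.mul_sum]
  exact Finset.sum_congr rfl fun i _ => by ring

lemma sq2_smul {n : ℕ} (c : ℝ) (x : Fin n → ℝ) : sq2 (c • x) = c^2 * sq2 x := by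
  simp only [sq2, Pi.smul_apply, smul_eq_mul, Finset.mul_sum, mul_pow]

-- nonexpansiveness of the gradient step x ↦ x - t • gradf x, for 0 < t, t L² ≤ 1
lemma gradstep_nonexpansive {m n : ℕ} (A : Matrix (Fin m) (Fin n) ℝ) (b : Fin m → ℝ)
    {t : ℝ} (ht0 : 0 < t) (htL : t * (opNorm A)^2 ≤ 1) (p q : Fin n → ℝ) :
    sq2 ((p - t • gradf A b p) - (q - t • gradf A b q)) ≤ sq2 (p - q) := by
  set d := p - q with hd
  set g := A.transpose.mulVec (A.mulVec d) with hg
  have h0 : (A.mulVec p - b) - (A.mulVec q - b) = A.mulVec d := by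
    rw [hd, Matrix.mulVec_sub]; abel
  have hgr : gradf A b p - gradf A b q = g := by
    unfold gradf
    rw [← Matrix.mulVec_sub, h0, hg]
  have hdiff : (p - t • gradf A b p) - (q - t • gradf A b q) = d + (-t) • g := by
    rw [← hgr, hd]
    funext i
    simp only [Pi.sub_apply, Pi.add_apply, Pi.smul_apply, smul_eq_mul]
    ring
  rw [hdiff, sq2_add, ip_smul_right, sq2_smul]
  have hip : ip d g = sq2 (A.mulVec d) := by
    rw [hg, ip_adj']
    rw [sq2_eq_ip]
  have hAg : sq2 g ≤ (opNorm A)^2 * sq2 (A.mulVec d) := by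
    have h1 : sq2 g = ip (A.mulVec d) (A.mulVec g) := by
      rw [sq2_eq_ip]
      calc ip g g = ip g (A.transpose.mulVec (A.mulVec d)) := by rw [← hg]
        _ = ip (A.mulVec g) (A.mulVec d) := ip_adj' A g (A.mulVec d)
        _ = ip (A.mulVec d) (A.mulVec g) := ip_comm _ _
    have h2 : sq2 g ≤ l2norm (A.mulVec d) * (opNorm A * l2norm g) := by
      rw [h1]
      calc ip (A.mulVec d) (A.mulVec g) ≤ l2norm (A.mulVec d) * l2norm (A.mulVec g) := ip_le _ _
        _ ≤ l2norm (A.mulVec d) * (opNorm A * l2norm g) :=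
            mul_le_mul_of_nonneg_left (mulVec_le A g) (l2_nonneg _)
    have hg2 : (l2norm g)^2 = sq2 g := l2_sq g
    have hd2 : (l2norm (A.mulVec d))^2 = sq2 (A.mulVec d) := l2_sq _
    nlinarith [l2_nonneg g, l2_nonneg (A.mulVec d), opNorm_nonneg A,
      sq_nonneg (opNorm A * l2norm (A.mulVec d) - l2norm g)]
  have hAd : 0 ≤ sq2 (A.mulVec d) := sq2_nonneg _
  have e1 : t^2 * sq2 g ≤ t^2 * ((opNorm A)^2 * sq2 (A.mulVec d)) :=
    mul_le_mul_of_nonneg_left hAg (sq_nonneg t)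
  have e2' : t^2 * (opNorm A)^2 ≤ t := by nlinarith
  have e3 : t^2 * (opNorm A)^2 * sq2 (A.mulVec d) ≤ t * sq2 (A.mulVec d) :=
    mul_le_mul_of_nonneg_right e2' hAd
  have e4 : 0 ≤ t * sq2 (A.mulVec d) := mul_nonneg ht0.le hAd
  nlinarith [e1, e3, e4, hip]

end HC

namespace HC

lemma ip_neg_right {n : ℕ} (x y : Fin n → ℝ) : ip x (-y) = - ip x y := by
  simp only [ip, Pi.neg_apply, mul_neg]
  exact Finset.sum_neg_distrib (f := fun i => x i * y i)

lemma sq2_neg {n : ℕ} (x y : Fin n → ℝ) : sq2 (x - y) = sq2 (y - x) := by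
  simp only [sq2, Pi.sub_apply]
  exact Finset.sum_congr rfl fun i _ => by ring

lemma l1_nonneg {n : ℕ} (x : Fin n → ℝ) : 0 ≤ l1norm x :=
  Finset.sum_nonneg fun i _ => abs_nonneg _

lemma sq2_mulVec_le {m n : ℕ} (A : Matrix (Fin m) (Fin n) ℝ) (z : Fin n → ℝ) :
    sq2 (A.mulVec z) ≤ (opNorm A)^2 * sq2 z := by
  have h := mulVec_le A z
  have h1 := l2_sq (A.mulVec z)
  have h2 := l2_sq z
  nlinarith [l2_nonneg (A.mulVec z), l2_nonneg z, opNorm_nonneg A]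

lemma ip_split {n : ℕ} (a c g : Fin n → ℝ) (t : ℝ) :
    ip ((a - c) - t • g) (a - c) = sq2 (a - c) - t * ip g (a - c) := by
  simp only [ip, sq2, Pi.sub_apply, Pi.smul_apply, smul_eq_mul, Finset.mul_sum]
  rw [← Finset.sum_sub_distrib]
  exact Finset.sum_congr rfl fun i _ => by ring

lemma ip_polar {n : ℕ} (a bb c : Fin n → ℝ) :
    2 * ip (a - c) (bb - c) = sq2 (a - c) + sq2 (bb - c) - sq2 (a - bb) := by
  simp only [ip, sq2, Pi.sub_apply, Finset.mul_sum]
  rw [← Finset.sum_add_distrib, ← Finset.sum_sub_distrib]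
  exact Finset.sum_congr rfl fun i _ => by ring

lemma Flasso_eq {m n : ℕ} (A : Matrix (Fin m) (Fin n) ℝ) (b : Fin m → ℝ) (lam : ℝ)
    (p : Fin n → ℝ) : Flasso A b lam p = (1/2) * sq2 (A.mulVec p - b) + lam * l1norm p := by
  rw [Flasso, l2_sq]

section descent
variable {m n : ℕ} (A : Matrix (Fin m) (Fin n) ℝ) (b : Fin m → ℝ)
variable {lam t : ℝ}

/-- ISTA descent inequality for the `v`-step, multiplied through by `t`. -/
lemma descent_v (hlam : 0 ≤ lam) (ht0 : 0 < t) (htL : t * (opNorm A)^2 ≤ 1) (p : Fin n → ℝ) :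
    t * Flasso A b lam (soft (lam * t) (p - t • gradf A b p)) ≤
      t * Flasso A b lam p
        - (1 - t * (opNorm A)^2 / 2) * sq2 (soft (lam * t) (p - t • gradf A b p) - p) := by
  set g := gradf A b p with hgdef
  set vv := soft (lam * t) (p - t • g) with hvv
  have hθ : 0 ≤ lam * t := mul_nonneg hlam ht0.le
  have hprox := soft_prox hθ (p - t • g) p
  rw [← hvv] at hprox
  have hz : (p - t • g) - vv = (p - vv) - t • g := by
    funext i; simp only [Pi.sub_apply, Pi.smul_apply, smul_eq_mul]; ring
  rw [hz, ip_split] at hprox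
  have hquad := f_expand A b p vv
  have hAle : sq2 (A.mulVec (vv - p)) ≤ (opNorm A)^2 * sq2 (vv - p) := sq2_mulVec_le A _
  have hipflip : ip g (p - vv) = - ip g (vv - p) := by
    have h : p - vv = -(vv - p) := by funext i; simp only [Pi.sub_apply, Pi.neg_apply]; ring
    rw [h, ip_neg_right]
  rw [hipflip, sq2_neg p vv] at hprox
  rw [Flasso_eq, Flasso_eq, hquad]
  have hAz : 0 ≤ sq2 (A.mulVec (vv - p)) := sq2_nonneg _
  have hV : 0 ≤ sq2 (vv - p) := sq2_nonneg _
  nlinarith [hprox, hAle, ht0]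

/-- ISTA descent inequality for the `w`-step relative to a point `p`, multiplied by `t`. -/
lemma descent_w (hlam : 0 ≤ lam) (ht0 : 0 < t) (htL : t * (opNorm A)^2 ≤ 1) (uu p : Fin n → ℝ) :
    t * Flasso A b lam (soft (lam * t) (uu - t • gradf A b uu)) ≤
      t * Flasso A b lam p
        + (1/2) * (sq2 (uu - p) - sq2 (p - soft (lam * t) (uu - t • gradf A b uu))) := by
  set g := gradf A b uu with hgdef
  set ww := soft (lam * t) (uu - t • g) with hww
  have hθ : 0 ≤ lam * t := mul_nonneg hlam ht0.le
  have hprox := soft_prox hθ (uu - t • g) p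
  rw [← hww] at hprox
  -- (uu - t•g) - ww = (uu - ww) - t•g
  have hz : (uu - t • g) - ww = (uu - ww) - t • g := by
    funext i; simp only [Pi.sub_apply, Pi.smul_apply, smul_eq_mul]; ring
  rw [hz] at hprox
  -- expand ip ((uu - ww) - t•g) (p - ww)
  have hsplit : ip ((uu - ww) - t • g) (p - ww)
      = ip (uu - ww) (p - ww) - t * ip g (p - ww) := by
    simp only [ip, Pi.sub_apply, Pi.smul_apply, smul_eq_mul, Finset.mul_sum]
    rw [← Finset.sum_sub_distrib]
    exact Finset.sum_congr rfl fun i _ => by ring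
  rw [hsplit] at hprox
  have hpol := ip_polar uu p ww
  -- 2 ip (uu - ww) (p - ww) = sq2 (uu - ww) + sq2 (p - ww) - sq2 (uu - p)
  -- quadratic expansions
  have hq1 := f_expand A b uu ww
  have hq2 := f_expand A b uu p
  have hA1 : sq2 (A.mulVec (ww - uu)) ≤ (opNorm A)^2 * sq2 (ww - uu) := sq2_mulVec_le A _
  have hA2 : 0 ≤ sq2 (A.mulVec (p - uu)) := sq2_nonneg _
  -- relate ip g (p - ww) to ip g (p - uu) - ip g (ww - uu)
  have hiplin : ip g (p - ww) = ip g (p - uu) - ip g (ww - uu) := by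
    simp only [ip, Pi.sub_apply, Finset.mul_sum]
    rw [← Finset.sum_sub_distrib]
    exact Finset.sum_congr rfl fun i _ => by ring
  rw [hiplin] at hprox
  rw [Flasso_eq, Flasso_eq, hq1]
  have hWnn : 0 ≤ sq2 (p - ww) := sq2_nonneg _
  have hUW : 0 ≤ sq2 (ww - uu) := sq2_nonneg _
  -- note hq2 : sq2 (A p - b) = sq2 (A uu - b) + 2 ip g (p - uu) + sq2 (A (p - uu))
  have e1 : t * sq2 (A.mulVec (ww - uu)) ≤ t * ((opNorm A)^2 * sq2 (ww - uu)) :=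
    mul_le_mul_of_nonneg_left hA1 ht0.le
  have e2 : t * (opNorm A)^2 * sq2 (ww - uu) ≤ 1 * sq2 (ww - uu) :=
    mul_le_mul_of_nonneg_right htL hUW
  have e3 : 0 ≤ t * sq2 (A.mulVec (p - uu)) := mul_nonneg ht0.le hA2
  have hsn : sq2 (uu - ww) = sq2 (ww - uu) := sq2_neg _ _
  nlinarith [hprox, hpol, hq2, e1, e2, e3, hsn]

/-- Convexity of the lasso objective along the segment. -/
lemma Flasso_convex (hlam : 0 ≤ lam) {a : ℝ} (ha0 : 0 ≤ a) (ha1 : a ≤ 1)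
    (vv ww : Fin n → ℝ) :
    Flasso A b lam (a • vv + (1 - a) • ww) ≤
      a * Flasso A b lam vv + (1 - a) * Flasso A b lam ww := by
  rw [Flasso_eq, Flasso_eq, Flasso_eq]
  have hAcomb : A.mulVec (a • vv + (1 - a) • ww) - b
      = a • (A.mulVec vv - b) + (1 - a) • (A.mulVec ww - b) := by
    rw [Matrix.mulVec_add, Matrix.mulVec_smul, Matrix.mulVec_smul]
    funext i
    simp only [Pi.sub_apply, Pi.add_apply, Pi.smul_apply, smul_eq_mul]
    ring
  have hf : sq2 (A.mulVec (a • vv + (1 - a) • ww) - b)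
      ≤ a * sq2 (A.mulVec vv - b) + (1 - a) * sq2 (A.mulVec ww - b) := by
    rw [hAcomb]
    simp only [sq2, Pi.add_apply, Pi.smul_apply, smul_eq_mul, Finset.mul_sum]
    rw [← Finset.sum_add_distrib]
    apply Finset.sum_le_sum
    intro i _
    nlinarith [sq_nonneg ((A.mulVec vv - b) i - (A.mulVec ww - b) i), ha0, ha1,
      mul_nonneg ha0 (sub_nonneg.mpr ha1)]
  have hl1 : l1norm (a • vv + (1 - a) • ww) ≤ a * l1norm vv + (1 - a) * l1norm ww := by
    simp only [l1norm, Pi.add_apply, Pi.smul_apply, smul_eq_mul, Finset.mul_sum]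
    rw [← Finset.sum_add_distrib]
    apply Finset.sum_le_sum
    intro i _
    calc |a * vv i + (1 - a) * ww i| ≤ |a * vv i| + |(1 - a) * ww i| := abs_add_le _ _
      _ = a * |vv i| + (1 - a) * |ww i| := by
          rw [abs_mul, abs_mul, abs_of_nonneg ha0, abs_of_nonneg (by linarith : (0:ℝ) ≤ 1 - a)]
  nlinarith [hf, hl1, hlam]

end descent
end HC

namespace HC

lemma l2_flip {n : ℕ} (x y : Fin n → ℝ) : l2norm (x - y) = l2norm (y - x) := by
  rw [l2_eq_sqrt_sq2, l2_eq_sqrt_sq2, sq2_neg]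

lemma abs_apply_le_l2 {n : ℕ} (y : Fin n → ℝ) (j : Fin n) : |y j| ≤ l2norm y := by
  rw [l2_eq_sqrt_sq2]
  have h1 : (y j)^2 ≤ sq2 y := by
    have := Finset.single_le_sum (f := fun k => (y k)^2) (fun k _ => sq_nonneg _)
      (Finset.mem_univ j)
    exact this
  calc |y j| = Real.sqrt ((y j)^2) := (Real.sqrt_sq_eq_abs _).symm
    _ ≤ Real.sqrt (sq2 y) := Real.sqrt_le_sqrt h1

lemma l2_le_of_sq2_le {n : ℕ} {x : Fin n → ℝ} {c : ℝ} (hc : 0 ≤ c) (h : sq2 x ≤ c^2) :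
    l2norm x ≤ c := by
  rw [l2_eq_sqrt_sq2]
  calc Real.sqrt (sq2 x) ≤ Real.sqrt (c^2) := Real.sqrt_le_sqrt h
    _ = |c| := Real.sqrt_sq_eq_abs c
    _ = c := abs_of_nonneg hc

end HC

open HC

set_option maxHeartbeats 2000000

/-- Theorem 2: convergence of HCISTA, precise stationarity form. Every accumulation point
of the iterates is a stationary point of `f(x) = (1/2)‖Ax-b‖₂²`, i.e. `Aᵀ(Ax̄-b) = 0`;
equivalently, a global minimizer of that function. -/
theorem hcista_theorem2 {M N : ℕ} (hM : 0 < M) (hN : 0 < N)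
    (A : Matrix (Fin M) (Fin N) ℝ) (hA : A ≠ 0) (b : Fin M → ℝ)
    (x v u w : ℕ → Fin N → ℝ) (δ t lam α : ℕ → ℝ) (Clam : ℝ) (hClam : 0 < Clam)
    (hδ : ∀ n, 1 / 4 < δ n ∧ δ n < 1 / 2)
    (ht : ∀ n, 1 / (4 * δ n * (opNorm A) ^ 2) ≤ t n ∧ t n ≤ 1 / (opNorm A) ^ 2)
    (hlam : ∀ n, 0 < lam n)
    (hv : ∀ n, v n = soft (lam n * t n) (x n - t n • gradf A b (x n)))
    (hw : ∀ n, w n = soft (lam n * t n) (u n - t n • gradf A b (u n)))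
    (hxs : ∀ n, x (n + 1) = α n • v n + (1 - α n) • w n)
    (hα1 : ∀ n, v n = x n → α n = 1)
    (hα2 : ∀ n, v n ≠ x n →
      (l2norm (u n - x n)) ^ 2 /
        ((l2norm (u n - x n)) ^ 2
          + (1 - 2 * t n * δ n * (opNorm A) ^ 2) * (l2norm (v n - x n)) ^ 2) ≤ α n
        ∧ α n < 1)
    (hlam' : ∀ n, lam (n + 1) ≤ min (lam n) (Clam * l2norm (x (n + 1) - x n)))
    (hAssumption1 : ∃ ηc : ℝ, 0 < ηc ∧
      ∀ n, v n ≠ x n → l2norm (u n - x n) ≤ ηc * l2norm (v n - x n)) :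
    ∀ xbar : Fin N → ℝ,
      (∃ φ : ℕ → ℕ, StrictMono φ ∧
        Filter.Tendsto (fun k => x (φ k)) Filter.atTop (nhds xbar)) →
      A.transpose.mulVec (A.mulVec xbar - b) = 0 ∧
      ∀ y : Fin N → ℝ,
        (1 / 2) * (l2norm (A.mulVec xbar - b)) ^ 2 ≤ (1 / 2) * (l2norm (A.mulVec y - b)) ^ 2 := by
  obtain ⟨ηc, hηc, hAss⟩ := hAssumption1
  set L : ℝ := opNorm A with hLdef
  have hL : 0 < L := opNorm_pos A hA
  have hL2 : 0 < L ^ 2 := pow_pos hL 2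
  have hδ0 : ∀ n, 0 < δ n := fun n => lt_trans (by norm_num) (hδ n).1
  have ht0 : ∀ n, 0 < t n := fun n =>
    lt_of_lt_of_le (div_pos one_pos (by have := hδ0 n; positivity)) (ht n).1
  have htL : ∀ n, t n * L ^ 2 ≤ 1 := by
    intro n
    have h := (ht n).2
    rw [le_div_iff₀ hL2] at h
    exact h
  have htlb : ∀ n, 1 ≤ 4 * δ n * L ^ 2 * t n := by
    intro n
    have h := (ht n).1
    rw [div_le_iff₀ (by have := hδ0 n; positivity)] at h
    linarith [h]
  -- v n ≠ x n for every n
  have hvne : ∀ n, v n ≠ x n := by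
    intro n h
    have hα := hα1 n h
    have hxx : x (n + 1) = x n := by
      rw [hxs n, hα, h]
      funext i
      simp
    have h1 : lam (n + 1) ≤ Clam * l2norm (x (n + 1) - x n) :=
      le_trans (hlam' n) (min_le_right _ _)
    rw [hxx, sub_self, l2_zero, mul_zero] at h1
    exact absurd h1 (not_le.mpr (hlam (n + 1)))
  -- abbreviations
  have hVpos : ∀ n, 0 < sq2 (v n - x n) := fun n =>
    sq2_pos (sub_ne_zero.mpr (hvne n))
  -- soft steps are jointly nonexpansive
  have hwv : ∀ n, sq2 (w n - v n) ≤ sq2 (u n - x n) := by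
    intro n
    have hθ : 0 ≤ lam n * t n := mul_nonneg (hlam n).le (ht0 n).le
    rw [hv n, hw n]
    calc sq2 (soft (lam n * t n) (u n - t n • gradf A b (u n))
          - soft (lam n * t n) (x n - t n • gradf A b (x n)))
        ≤ sq2 ((u n - t n • gradf A b (u n)) - (x n - t n • gradf A b (x n))) :=
          sq2_soft_sub hθ _ _
      _ ≤ sq2 (u n - x n) := gradstep_nonexpansive A b (ht0 n) (htL n) (u n) (x n)
  -- Assumption 1 in squared form
  have hPle : ∀ n, sq2 (u n - x n) ≤ ηc ^ 2 * sq2 (v n - x n) := by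
    intro n
    have h := hAss n (hvne n)
    have h1 := l2_sq (u n - x n)
    have h2 := l2_sq (v n - x n)
    nlinarith [l2_nonneg (u n - x n), l2_nonneg (v n - x n), hηc]
  -- the master one-step descent inequality
  have key : ∀ n, Flasso A b (lam (n + 1)) (x (n + 1)) ≤
      Flasso A b (lam n) (x n) - (L ^ 2 / 23) * sq2 (v n - x n) := by
    intro n
    set P := sq2 (u n - x n) with hPdef
    set V := sq2 (v n - x n) with hVdef
    set W := sq2 (x n - w n) with hWdef
    have hP0 : 0 ≤ P := sq2_nonneg _
    have hV0 : 0 < V := hVpos n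
    have hW0 : 0 ≤ W := sq2_nonneg _
    have hαn := hα2 n (hvne n)
    set q : ℝ := 1 - 2 * t n * δ n * L ^ 2 with hqdef
    have hq0 : 0 < q := by
      have h1 := htL n
      have h2 := (hδ n).2
      have h3 := (ht0 n)
      nlinarith [mul_nonneg (sub_nonneg.mpr (htL n)) (hδ0 n).le, hδ0 n]
    have hqhalf : q ≤ 1 / 2 := by
      have := htlb n
      nlinarith
    have hDpos : 0 < P + q * V := add_pos_of_nonneg_of_pos hP0 (mul_pos hq0 hV0)
    -- rewrite the α lower bound using sq2
    have hαlb : P / (P + q * V) ≤ α n := by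
      have h := hαn.1
      rw [l2_sq, l2_sq] at h
      exact h
    have hα0 : 0 ≤ α n := le_trans (div_nonneg hP0 hDpos.le) hαlb
    have hα1' : α n ≤ 1 := hαn.2.le
    have hPαD : P ≤ α n * (P + q * V) := (div_le_iff₀ hDpos).mp hαlb
    -- descent inequalities
    have hdv := descent_v A b (hlam n).le (ht0 n) (htL n) (x n)
    rw [← hv n] at hdv
    have hdw := descent_w A b (hlam n).le (ht0 n) (htL n) (u n) (x n)
    rw [← hw n] at hdw
    -- convexity
    have hconv := Flasso_convex A b (hlam n).le hα0 hα1' (v n) (w n)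
    rw [← hxs n] at hconv
    -- multiply convexity by t n
    have hstep : t n * Flasso A b (lam n) (x (n + 1)) ≤
        t n * Flasso A b (lam n) (x n)
          - α n * ((1 - t n * L ^ 2 / 2) * V) + (1 - α n) * ((1/2) * (P - W)) := by
      have h1 : t n * Flasso A b (lam n) (x (n + 1)) ≤
          α n * (t n * Flasso A b (lam n) (v n))
            + (1 - α n) * (t n * Flasso A b (lam n) (w n)) := by
        have := mul_le_mul_of_nonneg_left hconv (ht0 n).le
        linarith [this]
      have h2 := mul_le_mul_of_nonneg_left hdv hα0
      have h3 := mul_le_mul_of_nonneg_left hdw (by linarith : (0:ℝ) ≤ 1 - α n)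
      linarith [h1, h2, h3]
    -- conclude t n * (Fx - Fx') ≥ t n * L^2 * V / 23 in both cases
    have hmain : t n * (L ^ 2 / 23 * V) ≤
        t n * (Flasso A b (lam n) (x n) - Flasso A b (lam n) (x (n + 1))) := by
      by_cases hcase : P ≤ V / 9
      · -- case A : u is close to x, so w is far from x
        have hW49 : 4 / 9 * V ≤ W := by
          set rv := l2norm (v n - x n) with hrv
          set rw' := l2norm (x n - w n) with hrw
          set rwv := l2norm (w n - v n) with hrwv
          have h1 : rv ≤ rw' + rwv := by
            rw [hrv, ← l2_flip]
            exact l2_sub_le (x n) (w n) (v n)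
          have h2 : rwv ^ 2 ≤ V / 9 := by
            rw [hrwv, l2_sq]
            exact le_trans (hwv n) hcase
          have h3 : rv ^ 2 = V := l2_sq _
          have h4 : rwv ≤ rv / 3 := by
            nlinarith [l2_nonneg (w n - v n), l2_nonneg (v n - x n)]
          have h5 : rw' ^ 2 = W := l2_sq _
          nlinarith [l2_nonneg (x n - w n), l2_nonneg (v n - x n)]
        have hc12 : (1:ℝ)/2 ≤ 1 - t n * L ^ 2 / 2 := by linarith [htL n]
        have hc12V : V / 2 ≤ (1 - t n * L ^ 2 / 2) * V := by
          nlinarith [mul_nonneg (sub_nonneg.mpr (htL n)) hV0.le]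
        have e1 := mul_le_mul_of_nonneg_left hc12V hα0
        have e2 : (1 - α n) * ((1/2) * (P - W)) ≤ (1 - α n) * (-(V / 6)) :=
          mul_le_mul_of_nonneg_left (by linarith [hcase, hW49]) (by linarith)
        have e3 : 0 ≤ α n * V := mul_nonneg hα0 hV0.le
        have hV6 : t n * Flasso A b (lam n) (x (n + 1)) ≤
            t n * Flasso A b (lam n) (x n) - V / 6 := by
          linarith [hstep, e1, e2, e3]
        have e4 : 0 ≤ (1 - t n * L ^ 2) * V := mul_nonneg (sub_nonneg.mpr (htL n)) hV0.le
        linarith [hV6, e4]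
      · -- case B : P ≥ V / 9
        push_neg at hcase
        have hPbig : V / 9 ≤ P := hcase.le
        have keyB : P / 2 + (t n * L ^ 2) * V / 23 ≤ α n * ((1 - t n * L ^ 2 / 2) * V + P / 2) := by
          have hcv : (0:ℝ) ≤ (1 - t n * L ^ 2 / 2) * V + P / 2 := by
            nlinarith [htL n, hV0.le]
          have hmul : P * ((1 - t n * L ^ 2 / 2) * V + P / 2)
              ≤ α n * ((1 - t n * L ^ 2 / 2) * V + P / 2) * (P + q * V) := by
            calc P * ((1 - t n * L ^ 2 / 2) * V + P / 2)
                ≤ (α n * (P + q * V)) * ((1 - t n * L ^ 2 / 2) * V + P / 2) :=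
                  mul_le_mul_of_nonneg_right hPαD hcv
              _ = α n * ((1 - t n * L ^ 2 / 2) * V + P / 2) * (P + q * V) := by ring
          have hpoly : (P / 2 + (t n * L ^ 2) * V / 23) * (P + q * V)
              ≤ P * ((1 - t n * L ^ 2 / 2) * V + P / 2) := by
            have hτ0 : 0 ≤ t n * L ^ 2 := mul_nonneg (ht0 n).le hL2.le
            have hτ1 : t n * L ^ 2 ≤ 1 := htL n
            have hσ : 1 ≤ 4 * (δ n * (t n * L ^ 2)) := by linarith [htlb n]
            have hprod : 0 ≤ (4 * (δ n * (t n * L ^ 2)) - 1) * (t n * L ^ 2) :=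
              mul_nonneg (by linarith) hτ0
            have hbr : 0 ≤ 23 + 46 * (δ n * (t n * L ^ 2)) - 43 * (t n * L ^ 2)
                + 36 * (δ n * (t n * L ^ 2)) * (t n * L ^ 2) := by
              nlinarith [hσ, hτ1, hprod]
            have hPV : 0 ≤ P * V := mul_nonneg hP0 hV0.le
            have hbrPV := mul_nonneg hPV hbr
            have hq0' : (0:ℝ) ≤ 1 - 2 * t n * δ n * L ^ 2 := by rw [← hqdef]; exact hq0.le
            have hqv : (t n * L ^ 2) * (1 - 2 * t n * δ n * L ^ 2) * V * V
                ≤ (t n * L ^ 2) * (1 - 2 * t n * δ n * L ^ 2) * (9 * P) * V := by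
              apply mul_le_mul_of_nonneg_right _ hV0.le
              exact mul_le_mul_of_nonneg_left (by linarith) (mul_nonneg hτ0 hq0')
            rw [hqdef]
            linarith [hbrPV, hqv]
          have := le_trans hpoly hmul
          exact le_of_mul_le_mul_right (by linarith [this]) hDpos
        have hfin : t n * Flasso A b (lam n) (x (n + 1)) ≤
            t n * Flasso A b (lam n) (x n) - (t n * L ^ 2) * V / 23 := by
          have e5 : 0 ≤ (1 - α n) * W := mul_nonneg (by linarith) hW0
          linarith [hstep, keyB, e5]
        linarith [hfin]
    have hQ : Flasso A b (lam n) (x n) - Flasso A b (lam n) (x (n + 1)) ≥ L ^ 2 / 23 * V :=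
      le_of_mul_le_mul_left (by linarith [hmain]) (ht0 n)
    -- decrease lam
    have hlamdec : lam (n + 1) ≤ lam n := le_trans (hlam' n) (min_le_left _ _)
    have hmono : Flasso A b (lam (n + 1)) (x (n + 1)) ≤ Flasso A b (lam n) (x (n + 1)) := by
      rw [Flasso_eq, Flasso_eq]
      nlinarith [l1_nonneg (x (n + 1)), hlamdec]
    linarith [hmono, hQ]
  -- nonnegativity and monotonicity of the lasso values
  set G : ℕ → ℝ := fun n => Flasso A b (lam n) (x n) with hGdef
  have hG0 : ∀ n, 0 ≤ G n := by
    intro n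
    rw [hGdef]
    simp only []
    rw [Flasso_eq]
    have := sq2_nonneg (A.mulVec (x n) - b)
    have := l1_nonneg (x n)
    nlinarith [(hlam n).le]
  have hGanti : Antitone G := by
    apply antitone_nat_of_succ_le
    intro n
    have := key n
    have hV := (hVpos n).le
    have : G (n + 1) ≤ G n - L ^ 2 / 23 * sq2 (v n - x n) := this
    nlinarith [hV, hL2.le]
  have hGbdd : BddBelow (Set.range G) := ⟨0, fun y ⟨n, hn⟩ => hn ▸ hG0 n⟩
  have hGtend : Filter.Tendsto G Filter.atTop (nhds (⨅ n, G n)) :=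
    tendsto_atTop_ciInf hGanti hGbdd
  have hGsucc : Filter.Tendsto (fun n => G (n + 1)) Filter.atTop (nhds (⨅ n, G n)) :=
    hGtend.comp (Filter.tendsto_add_atTop_nat 1)
  have hdiff : Filter.Tendsto (fun n => G n - G (n + 1)) Filter.atTop (nhds 0) := by
    have := hGtend.sub hGsucc
    simpa using this
  -- sq2 (v n - x n) → 0
  have hVtend : Filter.Tendsto (fun n => sq2 (v n - x n)) Filter.atTop (nhds 0) := by
    apply squeeze_zero (fun n => sq2_nonneg _) (g := fun n => 23 / L ^ 2 * (G n - G (n + 1)))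
    · intro n
      have hk := key n
      have : G n - G (n + 1) ≥ L ^ 2 / 23 * sq2 (v n - x n) := by
        have : G (n + 1) ≤ G n - L ^ 2 / 23 * sq2 (v n - x n) := hk
        linarith
      rw [ge_iff_le, ← sub_nonneg] at this
      rw [← sub_nonneg]
      have h23 : (0:ℝ) < 23 / L ^ 2 := by positivity
      calc (0:ℝ) ≤ 23 / L ^ 2 * (G n - G (n + 1) - L ^ 2 / 23 * sq2 (v n - x n)) :=
            mul_nonneg h23.le this
        _ = 23 / L ^ 2 * (G n - G (n + 1)) - sq2 (v n - x n) := by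
            field_simp
    · have := hdiff.const_mul (23 / L ^ 2)
      simpa using this
  -- l2norm (v n - x n) → 0
  have hrv : Filter.Tendsto (fun n => l2norm (v n - x n)) Filter.atTop (nhds 0) := by
    have hcomp := (Real.continuous_sqrt.tendsto 0).comp hVtend
    simp only [Function.comp_def, Real.sqrt_zero] at hcomp
    simpa only [l2_eq_sqrt_sq2] using hcomp
  -- the step sizes go to zero
  have hΔ : ∀ n, l2norm (x (n + 1) - x n) ≤ (1 + ηc) * l2norm (v n - x n) := by
    intro n
    have hxid : x (n + 1) - x n = α n • (v n - x n) + (1 - α n) • (w n - x n) := by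
      rw [hxs n]
      funext i
      simp only [Pi.sub_apply, Pi.add_apply, Pi.smul_apply, smul_eq_mul]
      ring
    have hα0 : 0 ≤ α n := by
      have hαn := hα2 n (hvne n)
      have hq0 : (0:ℝ) < 1 - 2 * t n * δ n * L ^ 2 := by
        nlinarith [mul_nonneg (sub_nonneg.mpr (htL n)) (hδ0 n).le, hδ0 n, (hδ n).2, htL n,
          ht0 n]
      have hD : (0:ℝ) < l2norm (u n - x n) ^ 2
          + (1 - 2 * t n * δ n * L ^ 2) * l2norm (v n - x n) ^ 2 := by
        have h2 := l2_sq (v n - x n)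
        have := hVpos n
        nlinarith [sq_nonneg (l2norm (u n - x n))]
      exact le_trans (div_nonneg (sq_nonneg _) hD.le) hαn.1
    have hα1' : α n ≤ 1 := (hα2 n (hvne n)).2.le
    have hwx : l2norm (w n - x n) ≤ (1 + ηc) * l2norm (v n - x n) := by
      have h1 : l2norm (w n - x n) ≤ l2norm (w n - v n) + l2norm (v n - x n) :=
        l2_sub_le (w n) (v n) (x n)
      have h2 : l2norm (w n - v n) ≤ l2norm (u n - x n) := by
        have := hwv n
        have ha := l2_sq (w n - v n)
        have hb := l2_sq (u n - x n)
        nlinarith [l2_nonneg (w n - v n), l2_nonneg (u n - x n)]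
      have h3 := hAss n (hvne n)
      linarith
    rw [hxid]
    calc l2norm (α n • (v n - x n) + (1 - α n) • (w n - x n))
        ≤ l2norm (α n • (v n - x n)) + l2norm ((1 - α n) • (w n - x n)) := l2_triangle _ _
      _ = α n * l2norm (v n - x n) + (1 - α n) * l2norm (w n - x n) := by
          rw [l2_smul, l2_smul, abs_of_nonneg hα0, abs_of_nonneg (by linarith)]
      _ ≤ (1 + ηc) * l2norm (v n - x n) := by
          have h5 := mul_le_mul_of_nonneg_left hwx (by linarith : (0:ℝ) ≤ 1 - α n)
          have hvx0 := l2_nonneg (v n - x n)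
          have h6 : 0 ≤ α n * (ηc * l2norm (v n - x n)) :=
            mul_nonneg hα0 (mul_nonneg hηc.le hvx0)
          nlinarith [h5, h6]
  have hlamtend : Filter.Tendsto lam Filter.atTop (nhds 0) := by
    rw [← Filter.tendsto_add_atTop_iff_nat 1]
    apply squeeze_zero (fun n => (hlam (n + 1)).le)
      (g := fun n => Clam * (1 + ηc) * l2norm (v n - x n))
    · intro n
      have h1 : lam (n + 1) ≤ Clam * l2norm (x (n + 1) - x n) :=
        le_trans (hlam' n) (min_le_right _ _)
      calc lam (n + 1) ≤ Clam * l2norm (x (n + 1) - x n) := h1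
        _ ≤ Clam * ((1 + ηc) * l2norm (v n - x n)) :=
            mul_le_mul_of_nonneg_left (hΔ n) hClam.le
        _ = Clam * (1 + ηc) * l2norm (v n - x n) := by ring
    · have := hrv.const_mul (Clam * (1 + ηc))
      simpa using this
  -- the gradient norms go to zero
  have hgrad : Filter.Tendsto (fun n => l2norm (gradf A b (x n))) Filter.atTop (nhds 0) := by
    apply squeeze_zero (fun n => l2_nonneg _)
      (g := fun n => 2 * L ^ 2 * l2norm (v n - x n) + Real.sqrt N * lam n)
    · intro n
      set θ := lam n * t n with hθdef
      have hθ0 : 0 ≤ θ := mul_nonneg (hlam n).le (ht0 n).le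
      -- soft-threshold is close to the identity
      have hclose : l2norm (v n - (x n - t n • gradf A b (x n))) ≤ Real.sqrt N * θ := by
        rw [hv n]
        apply l2_le_of_sq2_le (by positivity)
        have := sq2_soft_close hθ0 (x n - t n • gradf A b (x n))
        calc sq2 (soft θ (x n - t n • gradf A b (x n)) - (x n - t n • gradf A b (x n)))
            ≤ (N : ℝ) * θ ^ 2 := this
          _ = (Real.sqrt N * θ) ^ 2 := by
              have hns := Real.sq_sqrt (show (0:ℝ) ≤ (N:ℝ) by positivity)
              conv_lhs => rw [← hns]
              ring
      have hid : t n • gradf A b (x n)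
          = (x n - v n) + (v n - (x n - t n • gradf A b (x n))) := by
        funext i
        simp only [Pi.smul_apply, Pi.sub_apply, Pi.add_apply, smul_eq_mul]
        ring
      have htri : l2norm (t n • gradf A b (x n))
          ≤ l2norm (x n - v n) + l2norm (v n - (x n - t n • gradf A b (x n))) := by
        rw [congrArg l2norm hid]
        exact l2_triangle _ _
      have hleft : l2norm (t n • gradf A b (x n)) = t n * l2norm (gradf A b (x n)) := by
        rw [l2_smul, abs_of_nonneg (ht0 n).le]
      have hflip : l2norm (x n - v n) = l2norm (v n - x n) := l2_flip _ _
      have hbound : t n * l2norm (gradf A b (x n))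
          ≤ l2norm (v n - x n) + Real.sqrt N * (lam n * t n) := by
        rw [← hleft, ← hflip]
        calc l2norm (t n • gradf A b (x n))
            ≤ l2norm (x n - v n) + l2norm (v n - (x n - t n • gradf A b (x n))) := htri
          _ ≤ l2norm (x n - v n) + Real.sqrt N * θ := by linarith [hclose]
      -- use 1 ≤ 2 L² t
      have h2Lt : 1 ≤ 2 * L ^ 2 * t n := by
        have := htlb n
        have hd2 := (hδ n).2
        have := ht0 n
        nlinarith [mul_pos (ht0 n) hL2]
      have hgn0 : 0 ≤ l2norm (gradf A b (x n)) := l2_nonneg _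
      have hrv0 : 0 ≤ l2norm (v n - x n) := l2_nonneg _
      have hfinal : t n * l2norm (gradf A b (x n))
          ≤ t n * (2 * L ^ 2 * l2norm (v n - x n) + Real.sqrt N * lam n) := by
        have e1 : l2norm (v n - x n) ≤ (2 * L ^ 2 * t n) * l2norm (v n - x n) := by
          nlinarith [mul_le_mul_of_nonneg_right h2Lt hrv0]
        have e2 : Real.sqrt N * (lam n * t n) = t n * (Real.sqrt N * lam n) := by ring
        calc t n * l2norm (gradf A b (x n))
            ≤ l2norm (v n - x n) + Real.sqrt N * (lam n * t n) := hbound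
          _ ≤ (2 * L ^ 2 * t n) * l2norm (v n - x n) + t n * (Real.sqrt N * lam n) := by
              rw [← e2]; linarith [e1]
          _ = t n * (2 * L ^ 2 * l2norm (v n - x n) + Real.sqrt N * lam n) := by ring
      exact le_of_mul_le_mul_left hfinal (ht0 n)
    · have h1 := hrv.const_mul (2 * L ^ 2)
      have h2 := hlamtend.const_mul (Real.sqrt N)
      have := h1.add h2
      simpa using this
  -- pass to the accumulation point
  intro xbar hacc
  obtain ⟨φ, hφ, hconv⟩ := hacc
  have hgφ : Filter.Tendsto (fun k => l2norm (gradf A b (x (φ k)))) Filter.atTop (nhds 0) :=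
    hgrad.comp hφ.tendsto_atTop
  have hy : ∀ l, Filter.Tendsto (fun k => x (φ k) l) Filter.atTop (nhds (xbar l)) := by
    intro l
    exact Filter.Tendsto.comp (continuous_apply l).continuousAt hconv
  have hzero : gradf A b xbar = 0 := by
    funext j
    have h1 : Filter.Tendsto (fun k => gradf A b (x (φ k)) j) Filter.atTop (nhds 0) := by
      apply squeeze_zero_norm (fun k => abs_apply_le_l2 (gradf A b (x (φ k))) j) hgφ
    have h2 : Filter.Tendsto (fun k => gradf A b (x (φ k)) j) Filter.atTop
        (nhds (gradf A b xbar j)) := by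
      simp only [gradf, Matrix.mulVec, dotProduct, Pi.sub_apply]
      apply tendsto_finset_sum
      intro i _
      apply Filter.Tendsto.const_mul
      apply Filter.Tendsto.sub _ tendsto_const_nhds
      apply tendsto_finset_sum
      intro l _
      exact (hy l).const_mul _
    have := tendsto_nhds_unique h2 h1
    simpa using this
  constructor
  · exact hzero
  · intro y
    have hexp := f_expand A b xbar y
    have hipz : ip (gradf A b xbar) (y - xbar) = 0 := by
      rw [hzero]
      simp [ip]
    rw [hipz] at hexp
    rw [l2_sq, l2_sq]
    nlinarith [sq2_nonneg (A.mulVec (y - xbar)), hexp]
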